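/- arXiv:1802.02025 — 2 statements merged into one kernel-verified Lean document; each statement's English description precedes it below -/
import Mathlib

section
/- Let A be a commutative Noetherian ring, let P be a finite partially ordered set, and let G be an inverse system over P valued in A-modules. Define the inverse system Π⁰(G) by Π⁰(G)(p) = ∏_{q ≤ p} G(q), where for p ≤ p' the transition map Π⁰(G)(p') → Π⁰(G)(p) is the natural projection. Then Π⁰(G) is a flasque inverse system, and the natural morphism of inverse systems G → Π⁰(G), whose component at p has as coordinates the transition maps G(p) → G(q) for q ≤ p, is a monomorphism. In particular, every inverse system over P embeds into a flasque inverse system. -/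
open CategoryTheory CategoryTheory.Limits Opposite

noncomputable section

variable {A : Type} [CommRing A] {P : Type} [PartialOrder P]

/-- The inclusion of a subset `U ⊆ P`, viewed as a functor between the associated
(preorder) categories. -/
def inclFunctor (U : Set P) : (U : Type) ⥤ P :=
  Monotone.functor (f := fun q : U => (q : P)) fun _ _ h => h

/-- An inverse system `G` over the finite poset `P` valued in `A`-modules (a functor
`Pᵒᵖ ⥤ ModuleCat A`) is *flasque* if for every open set `U` of `P` in the dual
Alexandrov topology (i.e. for every lower set `U ⊆ P`) the natural restriction map
`lim_{p ∈ P} G(p) → lim_{u ∈ U} G(u)` is surjective. -/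
def IsFlasque (G : Pᵒᵖ ⥤ ModuleCat A) : Prop :=
  ∀ U : Set P, IsLowerSet U →
    Function.Surjective (limit.pre G (inclFunctor U).op)

/-- The inverse system `Π⁰(G)` with `Π⁰(G)(p) = ∏_{q ≤ p} G(q)`, where for `p ≤ p'`
the transition map `Π⁰(G)(p') → Π⁰(G)(p)` is the natural projection. -/
def Pi0 (G : Pᵒᵖ ⥤ ModuleCat A) : Pᵒᵖ ⥤ ModuleCat A where
  obj X := ModuleCat.of A (∀ q : {q : P // q ≤ X.unop}, G.obj (op (q : P)))
  map {X Y} f := ModuleCat.ofHom <|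
    LinearMap.pi fun q : {q : P // q ≤ Y.unop} =>
      LinearMap.proj (⟨(q : P), q.2.trans (leOfHom f.unop)⟩ : {q : P // q ≤ X.unop})
  map_id _ := rfl
  map_comp _ _ := rfl

/-- The natural morphism of inverse systems `G ⟶ Π⁰(G)`, whose component at `p` has as
coordinates the transition maps `G(p) → G(q)` for `q ≤ p`. -/
def iotaPi0 (G : Pᵒᵖ ⥤ ModuleCat A) : G ⟶ Pi0 G where
  app X := ModuleCat.ofHom <| LinearMap.pi fun q : {q : P // q ≤ X.unop} =>
    ((G.map (homOfLE q.2).op).hom : G.obj X →ₗ[A] G.obj (op (q : P)))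
  naturality X Y f := by
    ext g
    funext q
    show (G.map f ≫ G.map (homOfLE q.2).op).hom g = (G.map ((homOfLE _).op)).hom g
    rw [← G.map_comp]
    congr 1

/-- Let `A` be a commutative Noetherian ring, `P` a finite poset and
`G` an inverse system over `P` valued in `A`-modules.  Then the inverse system
`Π⁰(G)` (with `Π⁰(G)(p) = ∏_{q ≤ p} G(q)` and projections as transition maps) is
flasque, and the natural morphism of inverse systems `G ⟶ Π⁰(G)` is a monomorphism.
In particular, every inverse system over `P` embeds into a flasque one. -/
theorem pi0_isFlasque_and_mono [IsNoetherianRing A] [Finite P]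
    (G : Pᵒᵖ ⥤ ModuleCat A) :
    IsFlasque (Pi0 G) ∧ Mono (iotaPi0 G) := by
  constructor
  · intro U hU y
    classical
    set F := (inclFunctor U).op ⋙ Pi0 G with hF
    let c : ∀ X : Pᵒᵖ, (Pi0 G).obj X := fun X q =>
      if h : (q : P) ∈ U then (show ∀ q' : {q' : P // q' ≤ (q : P)}, G.obj (op (q' : P)) from (limit.π F (op ⟨(q : P), h⟩)).hom y) ⟨(q : P), le_refl _⟩ else 0
    have hc : ∀ {X Y : Pᵒᵖ} (f : X ⟶ Y), (Pi0 G).map f (c X) = c Y := by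
      intro X Y f
      rfl
    let s : Cone (Pi0 G) :=
      { pt := ModuleCat.of A A
        π :=
          { app := fun X => ModuleCat.ofHom (LinearMap.toSpanSingleton A _ (c X))
            naturality := fun X Y f => by
              apply ModuleCat.hom_ext
              apply LinearMap.ext
              intro a
              show ((Pi0 G).map f).hom (a • c X) = a • c Y
              rw [map_smul, hc] } }
    let one : (ModuleCat.of A A : Type) := (1 : A)
    refine ⟨limit.lift (Pi0 G) s one, ?_⟩
    refine Concrete.limit_ext F _ _ fun u => ?_
    have h1 : limit.π F u (limit.pre (Pi0 G) (inclFunctor U).op (limit.lift (Pi0 G) s one))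
        = c ((inclFunctor U).op.obj u) := by
      show (limit.lift (Pi0 G) s ≫ limit.pre (Pi0 G) (inclFunctor U).op ≫ limit.π F u) one
        = c ((inclFunctor U).op.obj u)
      rw [limit.pre_π, limit.lift_π]
      show (1 : A) • c ((inclFunctor U).op.obj u) = _
      exact one_smul A _
    have h2 : c ((inclFunctor U).op.obj u) = limit.π F u y := by
      change (_ : ∀ q : {q : P // q ≤ u.unop.1}, G.obj (op (q : P))) = _
      funext q
      have hq : (q : P) ∈ U := hU q.2 u.unop.2
      show (if h : (q : P) ∈ U then (limit.π F (op ⟨(q : P), h⟩) y) ⟨(q : P), le_refl _⟩ else 0)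
          = (show ∀ q : {q : P // q ≤ u.unop.1}, G.obj (op (q : P)) from (limit.π F u).hom y) q
      rw [dif_pos hq]
      have hw := limit.w F ((homOfLE (show (⟨(q : P), hq⟩ : U) ≤ u.unop from q.2)).op
        : u ⟶ op ⟨(q : P), hq⟩)
      rw [← hw]
      rfl
    exact h1.trans h2
  · have : ∀ X, Mono ((iotaPi0 G).app X) := by
      intro X
      rw [ModuleCat.mono_iff_injective]
      intro a b h
      have key : ∀ x : G.obj X, (show ∀ q : {q : P // q ≤ X.unop}, G.obj (op (q : P)) from ((iotaPi0 G).app X).hom x) ⟨X.unop, le_refl _⟩ = x := by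
        intro x
        show (G.map (homOfLE (le_refl X.unop)).op).hom x = x
        rw [show (homOfLE (le_refl X.unop)).op = 𝟙 X from rfl, G.map_id]
        rfl
      have h' : (show ∀ q : {q : P // q ≤ X.unop}, G.obj (op (q : P)) from ((iotaPi0 G).app X).hom a) = (show ∀ q : {q : P // q ≤ X.unop}, G.obj (op (q : P)) from ((iotaPi0 G).app X).hom b) := h
      have := congrFun h' ⟨X.unop, le_refl _⟩
      exact (key a).symm.trans (this.trans (key b))
    exact NatTrans.mono_of_mono_app _

end
end

section
/- Let A be a commutative Noetherian ring and let P be a finite partially ordered set. Then every injective object of the category Inv(P, Mod_A) of inverse systems over P valued in A-modules is flasque. -/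
open CategoryTheory CategoryTheory.Limits
open scoped Classical

noncomputable section

variable {A : Type} [CommRing A] {P : Type} [PartialOrder P]

namespace FlasqueAux

variable (U : Set P)

/-- `⊤` on `U`, `⊥` off `U`. -/
def S (p : P) : Submodule A A := if p ∈ U then ⊤ else ⊥

lemma S_antitone (hU : IsLowerSet U) {a b : P} (h : a ≤ b) :
    S (A := A) U b ≤ S (A := A) U a := by
  by_cases hb : b ∈ U
  · have ha : a ∈ U := hU h hb
    simp [S, ha]
  · simp [S, hb]

/-- The subfunctor of the constant functor `A` supported on the lower set `U`. -/
def subF (hU : IsLowerSet U) : Pᵒᵖ ⥤ ModuleCat A where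
  obj p := ModuleCat.of A (S (A := A) U p.unop)
  map {p q} f := ModuleCat.ofHom (Submodule.inclusion (S_antitone (A := A) U hU (leOfHom f.unop)))
  map_id := by intro p; ext x; rfl
  map_comp := by intro p q r f g; ext x; rfl

/-- Constant functor at `A`. -/
def constF : Pᵒᵖ ⥤ ModuleCat A := (Functor.const Pᵒᵖ).obj (ModuleCat.of A A)

/-- The inclusion natural transformation. -/
def ι (hU : IsLowerSet U) : subF (A := A) U hU ⟶ constF (A := A) (P := P) where
  app p := ModuleCat.ofHom (S (A := A) U p.unop).subtype
  naturality := by intro p q f; ext x; rfl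

instance (hU : IsLowerSet U) : Mono (ι (A := A) U hU) := by
  haveI : ∀ p : Pᵒᵖ, Mono ((ι (A := A) U hU).app p) := by
    intro p
    rw [ModuleCat.mono_iff_injective]
    exact Subtype.val_injective
  exact NatTrans.mono_of_mono_app _

end FlasqueAux

open FlasqueAux in
/-- Let `A` be a commutative Noetherian ring and `P` a finite poset.
Then every injective object of the category `Inv(P, Mod_A)` of inverse systems over
`P` valued in `A`-modules is flasque. -/
theorem isFlasque_of_injective [IsNoetherianRing A] [Finite P]
    (G : Pᵒᵖ ⥤ ModuleCat A) (hG : Injective G) : IsFlasque G := by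
  intro U hU x
  set FU := (inclFunctor U).op ⋙ G with hFU
  have hcompat : ∀ {u v : (U : Type)ᵒᵖ} (f : u ⟶ v),
      (FU.map f) (limit.π FU u x) = limit.π FU v x := by
    intro u v f
    have := limit.w FU f
    calc (FU.map f) (limit.π FU u x) = (limit.π FU u ≫ FU.map f) x := rfl
      _ = limit.π FU v x := by rw [this]
  let app0 : ∀ p : Pᵒᵖ, (subF (A := A) U hU).obj p ⟶ G.obj p := fun p =>
    if h : p.unop ∈ U then
      ModuleCat.ofHom ((LinearMap.toSpanSingleton A (G.obj p)
        (limit.π FU (Opposite.op ⟨p.unop, h⟩) x)).comp (S (A := A) U p.unop).subtype)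
    else 0
  let η : subF (A := A) U hU ⟶ G :=
    { app := app0
      naturality := by
        intro p q f
        ext s
        by_cases hp : p.unop ∈ U
        · have hq : q.unop ∈ U := hU (leOfHom f.unop) hp
          have key : (G.map f) (limit.π FU (Opposite.op ⟨p.unop, hp⟩) x)
              = limit.π FU (Opposite.op ⟨q.unop, hq⟩) x := by
            have := hcompat (u := Opposite.op ⟨p.unop, hp⟩) (v := Opposite.op ⟨q.unop, hq⟩)
              ((homOfLE (leOfHom f.unop : q.unop ≤ p.unop) :
                (⟨q.unop, hq⟩ : U) ⟶ ⟨p.unop, hp⟩).op)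
            exact this
          show app0 q (((subF (A := A) U hU).map f) s) = (G.map f) (app0 p s)
          have hL' : app0 q (((subF (A := A) U hU).map f) s)
              = ((S (A := A) U p.unop).subtype s) •
                  limit.π FU (Opposite.op ⟨q.unop, hq⟩) x := by
            simp only [app0, hq, ↓reduceDIte]; rfl
          have hR' : app0 p s
              = ((S (A := A) U p.unop).subtype s) •
                  limit.π FU (Opposite.op ⟨p.unop, hp⟩) x := by
            simp only [app0, hp, ↓reduceDIte]; rfl
          rw [hL', hR', ← key]; exact (map_smul (G.map f).hom _ _).symm
        · have hs0 : s = 0 := by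
            apply Subtype.ext
            have := s.2
            simp only [S, if_neg hp] at this
            exact (Submodule.mem_bot A).mp this
          show app0 q (((subF (A := A) U hU).map f) s) = (G.map f) (app0 p s)
          rw [hs0]
          simp only [map_zero]
      }
  obtain ⟨η', hη'⟩ := hG.factors η (ι (A := A) U hU)
  let c : Cone G := ⟨ModuleCat.of A A, η'⟩
  refine ⟨(limit.lift G c) (1 : A), Concrete.limit_ext (F := FU) _ _ fun u => ?_⟩
  have hp : ((inclFunctor U).op.obj u).unop ∈ U := u.unop.2
  have hs : (1 : A) ∈ S (A := A) U ((inclFunctor U).op.obj u).unop := by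
    simp only [S]
    split
    · trivial
    · exact absurd hp ‹_›
  calc limit.π FU u ((limit.pre G (inclFunctor U).op) ((limit.lift G c) (1 : A)))
      = (limit.pre G (inclFunctor U).op ≫ limit.π FU u) ((limit.lift G c) (1 : A)) := rfl
    _ = limit.π G ((inclFunctor U).op.obj u) ((limit.lift G c) (1 : A)) :=
        ConcreteCategory.congr_hom (limit.pre_π G (inclFunctor U).op u) _
    _ = (limit.lift G c ≫ limit.π G ((inclFunctor U).op.obj u)) (1 : A) := rfl
    _ = η'.app ((inclFunctor U).op.obj u) (1 : A) :=
        ConcreteCategory.congr_hom (limit.lift_π c ((inclFunctor U).op.obj u)) (1 : A)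
    _ = (ι (A := A) U hU ≫ η').app ((inclFunctor U).op.obj u)
          (⟨1, hs⟩ : S (A := A) U ((inclFunctor U).op.obj u).unop) := rfl
    _ = η.app ((inclFunctor U).op.obj u)
          (⟨1, hs⟩ : S (A := A) U ((inclFunctor U).op.obj u).unop) :=
        ConcreteCategory.congr_hom (congrArg (fun t => NatTrans.app t ((inclFunctor U).op.obj u)) hη') _
    _ = limit.π FU u x := by
        show app0 ((inclFunctor U).op.obj u) ⟨1, hs⟩ = _
        simp only [app0, hp, ↓reduceDIte]
        show (1 : A) • limit.π FU (Opposite.op ⟨((inclFunctor U).op.obj u).unop, hp⟩) x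
            = limit.π FU u x
        rw [one_smul]
        rfl

end
end
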